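/- Let t₁, t₂ ∈ ℝ, let ρ_{t₁,t₂} = (1/2)(L_{[t₁,t₁+1]} × δ₀ + δ₀ × L_{[t₂,t₂+1]}), and let (λ₁, λ₂) ∈ ℝ² be a zero of the Fourier transform of ρ_{t₁,t₂}, i.e. (ρ_{t₁,t₂})^(λ₁,λ₂) = 0. If |λ₁| ≤ 0.8, then λ₁ = λ₂ or λ₁ + λ₂ = 0. -/

import Mathlib

open MeasureTheory Filter Set
open scoped Real ENNReal

/-- The additive measure of Lebesgue type
`ρ_{t₁,t₂} = (1/2)(L_{[t₁,t₁+1]} × δ₀ + δ₀ × L_{[t₂,t₂+1]})` on `ℝ²`. -/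
noncomputable def rho (t₁ t₂ : ℝ) : Measure (ℝ × ℝ) :=
  (1 / 2 : ℝ≥0∞) • ((volume.restrict (Icc t₁ (t₁ + 1))).prod (Measure.dirac 0)
    + (Measure.dirac (0 : ℝ)).prod (volume.restrict (Icc t₂ (t₂ + 1))))

/-- `Λ` is a spectrum of the measure `ρ` on `ℝ²`: it is countable, the exponentials
`e_λ(x) = e^{2πi λ·x}`, `λ ∈ Λ`, are pairwise orthogonal in `L²(ρ)`, and they are total:
any `f ∈ L²(ρ)` orthogonal to all of them vanishes `ρ`-a.e. -/
def IsSpectrumOf (Λ : Set (ℝ × ℝ)) (ρ : Measure (ℝ × ℝ)) : Prop :=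
  Λ.Countable ∧
  (∀ a ∈ Λ, ∀ b ∈ Λ, a ≠ b →
    ∫ x : ℝ × ℝ,
      Complex.exp ((2 * π * ((a.1 - b.1) * x.1 + (a.2 - b.2) * x.2) : ℝ) * Complex.I) ∂ρ = 0) ∧
  (∀ f : ℝ × ℝ → ℂ, MemLp f 2 ρ →
    (∀ a ∈ Λ,
      ∫ x : ℝ × ℝ,
        f x * Complex.exp ((-2 * π * (a.1 * x.1 + a.2 * x.2) : ℝ) * Complex.I) ∂ρ = 0) →
    ∀ᵐ x ∂ρ, f x = 0)

/-- The Fourier transform of `ρ_{t₁,t₂}`: `ρ̂(ξ) = ∫ e^{-2πi ξ·x} dρ(x)`. -/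
noncomputable def rhoHat (t₁ t₂ : ℝ) (ξ : ℝ × ℝ) : ℂ :=
  ∫ x : ℝ × ℝ,
    Complex.exp ((-2 * π * (ξ.1 * x.1 + ξ.2 * x.2) : ℝ) * Complex.I) ∂(rho t₁ t₂)

/- ### Auxiliary lemmas -/

lemma chord_lt {u v : ℝ} (hu : 0 < u) (huv : u < v) (hv : v ≤ π) :
    Real.sin v / v < Real.sin u / u := by
  have h0v : 0 < v := hu.trans huv
  have hbv : (u / v) * v = u := div_mul_cancel₀ _ h0v.ne'
  have h := strictConcaveOn_sin_Icc.2 (Set.mem_Icc.2 ⟨le_rfl, Real.pi_pos.le⟩)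
    (Set.mem_Icc.2 ⟨h0v.le, hv⟩) h0v.ne
    (show (0:ℝ) < 1 - u / v by rw [sub_pos]; exact (div_lt_one h0v).2 huv)
    (show (0:ℝ) < u / v by positivity)
    (show (1 - u / v) + u / v = 1 by ring)
  simp only [smul_eq_mul, mul_zero, Real.sin_zero, zero_add, hbv] at h
  rw [div_lt_div_iff₀ h0v hu]
  rw [div_mul_eq_mul_div, div_lt_iff₀ h0v] at h
  linarith

lemma chord_le {u v : ℝ} (hu : 0 < u) (huv : u ≤ v) (hv : v ≤ π) :
    Real.sin v / v ≤ Real.sin u / u := by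
  rcases eq_or_lt_of_le huv with rfl | h
  · exact le_rfl
  · exact (chord_lt hu h hv).le

lemma sin_pi_div_five_gt : 0.58778 < Real.sin (π / 5) := by
  have hc : Real.cos (π / 5) = (1 + Real.sqrt 5) / 4 := Real.cos_pi_div_five
  have h5 : Real.sqrt 5 ≤ 2.236068 := by
    nlinarith [Real.sq_sqrt (by norm_num : (5:ℝ) ≥ 0), Real.sqrt_nonneg 5]
  have h5' : 2.236 ≤ Real.sqrt 5 := by
    nlinarith [Real.sq_sqrt (by norm_num : (5:ℝ) ≥ 0), Real.sqrt_nonneg 5]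
  have hs : Real.sin (π / 5) ^ 2 = 1 - Real.cos (π / 5) ^ 2 := by
    nlinarith [Real.sin_sq_add_cos_sq (π / 5)]
  have hsnn : 0 ≤ Real.sin (π / 5) := Real.sin_nonneg_of_nonneg_of_le_pi
    (by positivity) (by nlinarith [Real.pi_pos])
  nlinarith [hs, sq_nonneg (Real.sin (π / 5) - 0.58778)]

set_option maxHeartbeats 1000000 in
lemma main_ineq {a b : ℝ} (ha : 0 < a) (ha8 : a ≤ 0.8) (hb : 0 < b)
    (heq : |Real.sin (π * a)| / (π * a) = |Real.sin (π * b)| / (π * b)) : a = b := by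
  have pl : 3.141592 < π := Real.pi_gt_d6
  have pu : π < 3.1416 := by
    have := Real.pi_lt_d2
    linarith [Real.pi_lt_d6]
  have hS : 0.58778 < Real.sin (π / 5) := sin_pi_div_five_gt
  have hS1 : Real.sin (π / 5) ≤ 1 := Real.sin_le_one _
  set S := Real.sin (π / 5) with hSdef
  have hu0 : 0 < π * a := by positivity
  have hv0 : 0 < π * b := by positivity
  have huπ : π * a ≤ π * 0.8 := by nlinarith
  have hsinu : |Real.sin (π * a)| = Real.sin (π * a) := by
    rw [abs_of_nonneg]
    exact Real.sin_nonneg_of_nonneg_of_le_pi hu0.le (by nlinarith)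
  have hUeq : Real.sin (π * 0.8) = S := by
    rw [show π * 0.8 = π - π / 5 by ring, Real.sin_pi_sub]
  have hlow : S / (π * 0.8) ≤ Real.sin (π * a) / (π * a) := by
    rw [← hUeq]
    exact chord_le hu0 huπ (by nlinarith)
  rw [hsinu] at heq
  by_contra hab
  rcases lt_trichotomy b 1 with hb1 | hb1 | hb1
  · rcases lt_trichotomy a b with h | h | h
    · have := chord_lt hu0 (by nlinarith : π * a < π * b) (by nlinarith)
      rw [abs_of_nonneg (Real.sin_nonneg_of_nonneg_of_le_pi hv0.le (by nlinarith))] at heq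
      linarith
    · exact hab h
    · have := chord_lt hv0 (by nlinarith : π * b < π * a) (by nlinarith)
      rw [abs_of_nonneg (Real.sin_nonneg_of_nonneg_of_le_pi hv0.le (by nlinarith))] at heq
      linarith
  · subst hb1
    simp only [mul_one, Real.sin_pi, abs_zero, zero_div] at heq
    have : 0 < Real.sin (π * a) / (π * a) := by
      apply div_pos _ hu0
      apply Real.sin_pos_of_pos_of_lt_pi hu0
      nlinarith
    linarith
  · have hkey : |Real.sin (π * b)| / (π * b) < S / (π * 0.8) := by
      rw [div_lt_div_iff₀ hv0 (by positivity)]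
      rcases le_or_gt (2 * π) (π * b) with h2π | h2π
      · have h1 : |Real.sin (π * b)| ≤ 1 :=
          abs_le.2 ⟨Real.neg_one_le_sin _, Real.sin_le_one _⟩
        nlinarith [abs_nonneg (Real.sin (π * b))]
      · obtain ⟨w, hw⟩ : ∃ w, w = π * b - π := ⟨_, rfl⟩
        have hw0 : 0 < w := by rw [hw]; nlinarith
        have hwπ : w < π := by rw [hw]; nlinarith
        have habs : |Real.sin (π * b)| = Real.sin w := by
          have : Real.sin (π * b) = -Real.sin w := by
            rw [show π * b = w + π by rw [hw]; ring, Real.sin_add_pi]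
          rw [this, abs_neg, abs_of_nonneg (Real.sin_nonneg_of_nonneg_of_le_pi hw0.le hwπ.le)]
        rw [habs, show π * b = π + w by rw [hw]; ring]
        rcases le_or_gt w 0.9 with hw9 | hw9
        · have hsw : Real.sin w ≤ w := Real.sin_le hw0.le
          have hswn : 0 ≤ Real.sin w := Real.sin_nonneg_of_nonneg_of_le_pi hw0.le hwπ.le
          nlinarith
        · rcases le_or_gt w 1.15 with hw15 | hw15
          · obtain ⟨x, hx⟩ : ∃ x, x = π / 2 - w := ⟨_, rfl⟩
            have hx1 : x ≤ 0.6708 := by rw [hx]; nlinarith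
            have hx0 : 0.420796 ≤ x := by rw [hx]; nlinarith
            have hxnn : (0:ℝ) ≤ x := by linarith
            have hxabs : |x| = x := abs_of_nonneg hxnn
            have hcb : Real.cos x ≤ 1 - x ^ 2 / 2 + x ^ 4 * (5 / 96) := by
              have h1 : |x| ≤ 1 := by rw [hxabs]; linarith
              have h := abs_le.1 (Real.cos_bound h1)
              rw [hxabs] at h
              linarith [h.2]
            have hswcos : Real.sin w = Real.cos x := by
              rw [show w = π / 2 - x by rw [hx]; ring, Real.sin_pi_div_two_sub]
            have hx2 : 0.177069 ≤ x ^ 2 := by nlinarith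
            have hx4 : x ^ 4 ≤ 0.2024791 := by
              have := pow_le_pow_left₀ hxnn hx1 4
              nlinarith
            have : Real.sin w ≤ 0.92202 := by
              rw [hswcos]; nlinarith
            nlinarith
          · have : Real.sin w ≤ 1 := Real.sin_le_one _
            nlinarith [Real.sin_nonneg_of_nonneg_of_le_pi hw0.le hwπ.le]
    rw [heq] at hlow
    linarith

lemma rhoHat_eq (t₁ t₂ l₁ l₂ : ℝ) :
    rhoHat t₁ t₂ (l₁, l₂) = (1/2 : ℝ) •
      ((∫ x in Icc t₁ (t₁+1), Complex.exp ((-2 * π * (l₁ * x + l₂ * 0) : ℝ) * Complex.I)) +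
       (∫ x in Icc t₂ (t₂+1), Complex.exp ((-2 * π * (l₁ * 0 + l₂ * x) : ℝ) * Complex.I))) := by
  have hF : Continuous (fun x : ℝ × ℝ =>
      Complex.exp ((-2 * π * (l₁ * x.1 + l₂ * x.2) : ℝ) * Complex.I)) := by
    fun_prop
  have hg1 : Measurable (fun x : ℝ => (x, (0:ℝ))) := by fun_prop
  have hg2 : Measurable (fun y : ℝ => ((0:ℝ), y)) := by fun_prop
  rw [rhoHat, rho, integral_smul_measure, Measure.prod_dirac, Measure.dirac_prod]
  rw [integral_add_measure
    ((integrable_map_measure hF.aestronglyMeasurable hg1.aemeasurable).2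
      ((hF.comp (continuous_id.prodMk continuous_const)).integrableOn_Icc))
    ((integrable_map_measure hF.aestronglyMeasurable hg2.aemeasurable).2
      ((hF.comp (continuous_const.prodMk continuous_id)).integrableOn_Icc))]
  rw [integral_map hg1.aemeasurable hF.aestronglyMeasurable,
      integral_map hg2.aemeasurable hF.aestronglyMeasurable]
  norm_num

lemma oneD_zero (t c₂ : ℝ) :
    ∫ x in Icc t (t+1), Complex.exp ((-2 * π * ((0:ℝ) * x + c₂ * 0) : ℝ) * Complex.I) = 1 := by
  norm_num

lemma oneD_val (t l : ℝ) (hl : l ≠ 0) (c₂ : ℝ) :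
    ∫ x in Icc t (t+1), Complex.exp ((-2 * π * (l * x + c₂ * 0) : ℝ) * Complex.I)
      = (Complex.exp (((-2*π*l : ℝ) : ℂ) * Complex.I * (t+1))
          - Complex.exp (((-2*π*l : ℝ) : ℂ) * Complex.I * t)) / (((-2*π*l : ℝ) : ℂ) * Complex.I) := by
  have hl' : (-2*π*l : ℝ) ≠ 0 :=
    mul_ne_zero (mul_ne_zero (by norm_num) Real.pi_ne_zero) hl
  have hc : (((-2*π*l : ℝ) : ℂ) * Complex.I) ≠ 0 :=
    mul_ne_zero (by exact_mod_cast hl') Complex.I_ne_zero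
  rw [MeasureTheory.integral_Icc_eq_integral_Ioc,
      ← intervalIntegral.integral_of_le (by linarith : t ≤ t + 1)]
  rw [show (fun x : ℝ => Complex.exp ((-2 * π * (l * x + c₂ * 0) : ℝ) * Complex.I))
        = fun x : ℝ => Complex.exp ((((-2*π*l : ℝ) : ℂ) * Complex.I) * x) from
    funext fun x => by push_cast; ring_nf]
  rw [integral_exp_mul_complex hc]
  norm_cast

lemma norm_num_exp (θ : ℝ) :
    ‖Complex.exp ((θ : ℂ) * Complex.I) - 1‖ = 2 * |Real.sin (θ/2)| := by
  have h : Complex.exp ((θ : ℂ) * Complex.I) - 1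
      = Complex.ofReal (Real.cos θ - 1) + Complex.ofReal (Real.sin θ) * Complex.I := by
    rw [Complex.exp_mul_I]
    push_cast
    ring
  rw [h, Complex.norm_add_mul_I]
  have h2 : (Real.cos θ - 1)^2 + (Real.sin θ)^2 = (2 * Real.sin (θ/2))^2 := by
    have h1 : Real.sin (θ/2)^2 = 1/2 - Real.cos θ / 2 := by
      have := Real.sin_sq_eq_half_sub (θ/2)
      rw [show 2 * (θ/2) = θ by ring] at this
      linarith
    nlinarith [Real.sin_sq_add_cos_sq θ]
  rw [h2, Real.sqrt_sq_eq_abs, abs_mul]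
  norm_num

lemma norm_oneD (t l : ℝ) (hl : l ≠ 0) (c₂ : ℝ) :
    ‖∫ x in Icc t (t+1), Complex.exp ((-2 * π * (l * x + c₂ * 0) : ℝ) * Complex.I)‖
      = |Real.sin (π * l)| / (π * |l|) := by
  rw [oneD_val t l hl c₂]
  have h1 : Complex.exp (((-2*π*l : ℝ) : ℂ) * Complex.I * (t+1))
      - Complex.exp (((-2*π*l : ℝ) : ℂ) * Complex.I * t)
      = Complex.exp (((-2*π*l*t : ℝ) : ℂ) * Complex.I)
        * (Complex.exp (((-2*π*l : ℝ) : ℂ) * Complex.I) - 1) := by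
    rw [mul_sub, mul_one, ← Complex.exp_add]
    congr 2 <;> push_cast <;> ring
  rw [norm_div, h1, norm_mul, Complex.norm_exp_ofReal_mul_I, one_mul, norm_num_exp]
  have h2 : ‖((-2*π*l : ℝ) : ℂ) * Complex.I‖ = 2 * π * |l| := by
    rw [norm_mul, Complex.norm_I, mul_one, Complex.norm_real, Real.norm_eq_abs]
    rw [show (-2*π*l : ℝ) = -(2*π*l) by ring, abs_neg, abs_mul]
    rw [abs_of_pos (by positivity : (0:ℝ) < 2*π)]
  rw [h2]
  have h3 : |Real.sin (-2*π*l/2)| = |Real.sin (π * l)| := by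
    rw [show (-2*π*l/2 : ℝ) = -(π*l) by ring, Real.sin_neg, abs_neg]
  rw [h3]
  rw [show 2 * π * |l| = 2 * (π * |l|) by ring]
  have : (0:ℝ) < π * |l| := by positivity
  field_simp

lemma second_comm (t l c₁ : ℝ) :
    (∫ x in Icc t (t+1), Complex.exp ((-2 * π * (c₁ * 0 + l * x) : ℝ) * Complex.I))
      = ∫ x in Icc t (t+1), Complex.exp ((-2 * π * (l * x + c₁ * 0) : ℝ) * Complex.I) := by
  simp_rw [show ∀ x : ℝ, (-2 * π * (c₁ * 0 + l * x) : ℝ) = (-2 * π * (l * x + c₁ * 0) : ℝ)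
    from fun x => by ring]

lemma abs_sin_pi_abs (l : ℝ) : |Real.sin (π * |l|)| = |Real.sin (π * l)| := by
  rcases abs_choice l with h | h
  · rw [h]
  · rw [h, show π * -l = -(π * l) by ring, Real.sin_neg, abs_neg]

theorem stmt10 (t₁ t₂ l₁ l₂ : ℝ) (hzero : rhoHat t₁ t₂ (l₁, l₂) = 0)
    (hsmall : |l₁| ≤ 0.8) :
    l₁ = l₂ ∨ l₁ + l₂ = 0 := by
  rw [rhoHat_eq] at hzero
  rw [smul_eq_zero] at hzero
  rcases hzero with h | hzero
  · norm_num at h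
  have hsum := eq_neg_of_add_eq_zero_left hzero
  have hnorm := congrArg norm hsum
  rw [norm_neg] at hnorm
  rcases eq_or_ne l₁ 0 with rfl | h1 <;> rcases eq_or_ne l₂ 0 with rfl | h2
  · exact Or.inl rfl
  · -- l₁ = 0, l₂ ≠ 0 : contradiction
    exfalso
    rw [oneD_zero, second_comm, norm_oneD t₂ l₂ h2] at hnorm
    have hlt : |Real.sin (π * l₂)| < π * |l₂| := by
      have := Real.abs_sin_lt_abs (x := π * l₂) (by
        exact mul_ne_zero Real.pi_ne_zero h2)
      rwa [abs_mul, abs_of_pos Real.pi_pos] at this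
    have hpos : (0:ℝ) < π * |l₂| := by positivity
    rw [norm_one] at hnorm
    have := (div_lt_one hpos).2 hlt
    linarith
  · -- l₂ = 0, l₁ ≠ 0 : contradiction
    exfalso
    rw [norm_oneD t₁ l₁ h1, second_comm, oneD_zero, norm_one] at hnorm
    have hlt : |Real.sin (π * l₁)| < π * |l₁| := by
      have := Real.abs_sin_lt_abs (x := π * l₁) (mul_ne_zero Real.pi_ne_zero h1)
      rwa [abs_mul, abs_of_pos Real.pi_pos] at this
    have hpos : (0:ℝ) < π * |l₁| := by positivity
    have := (div_lt_one hpos).2 hlt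
    linarith
  · -- both nonzero
    rw [norm_oneD t₁ l₁ h1, second_comm, norm_oneD t₂ l₂ h2] at hnorm
    have habs : |l₁| = |l₂| := by
      apply main_ineq (abs_pos.2 h1) hsmall (abs_pos.2 h2)
      rw [abs_sin_pi_abs, abs_sin_pi_abs]
      exact hnorm
    rcases abs_eq_abs.1 habs with h | h
    · exact Or.inl h
    · exact Or.inr (by linarith)
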